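/- Let a be real and let i ≥ 1 be an integer. The function A_i(x) = ∑_{k=1}^i (-1)^k C_{i-k}^{(-a)}(-x+1) [C_k^{(a)}(-1) C_k^{(a)}(x-2) − C_k^{(a)}(-2) C_k^{(a)}(x-1)] is a polynomial in x of degree at most i, and its coefficient of x^i equals h_i = ((−1)^i / i!) C_{i-1}^{(a)}(i−2). -/

import Mathlib

/-- Generalized binomial coefficient `x(x-1)⋯(x-k+1)/k!`. -/
noncomputable def genChoose (x : ℝ) (k : ℕ) : ℝ :=
  (∏ j ∈ Finset.range k, (x - (j : ℝ))) / (Nat.factorial k : ℝ)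

/-- The Charlier polynomial `C_n^{(a)}(x) = ∑_{k=0}^n (x choose k) (-a)^{n-k}/(n-k)!`. -/
noncomputable def charlier (a : ℝ) (n : ℕ) (x : ℝ) : ℝ :=
  ∑ k ∈ Finset.range (n + 1),
    genChoose x k * (-a) ^ (n - k) / (Nat.factorial (n - k) : ℝ)

/-- Charlier polynomial with integer index, with the convention `C_{-1}^{(a)} ≡ 0`. -/
noncomputable def charlierZ (a : ℝ) (n : ℤ) (x : ℝ) : ℝ :=
  if 0 ≤ n then charlier a n.toNat x else 0

/-- Forward difference operator `Δf(x) = f(x+1) - f(x)`. -/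
def fdiff (f : ℝ → ℝ) : ℝ → ℝ := fun x => f (x + 1) - f x

/-- Backward difference operator `∇f(x) = f(x) - f(x-1)`. -/
def bdiff (f : ℝ → ℝ) : ℝ → ℝ := fun x => f x - f (x - 1)

/-- The generalized Charlier polynomial
`C_n^{a,N}(x) = [1 + N(-1)^n C_n^{(a)}(-1)] C_n^{(a)}(x) - N(-1)^n C_n^{(a)}(0) C_n^{(a)}(x-1)`. -/
noncomputable def genCharlier (a N : ℝ) (n : ℕ) (x : ℝ) : ℝ :=
  (1 + N * (-1) ^ n * charlier a n (-1)) * charlier a n x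
    - N * (-1) ^ n * charlier a n 0 * charlier a n (x - 1)

/-- The coefficient `A_i(x)` (for `i ≥ 1`) of the difference equation. -/
noncomputable def Acoef (a : ℝ) (i : ℕ) (x : ℝ) : ℝ :=
  ∑ k ∈ Finset.Icc 1 i, (-1 : ℝ) ^ k * charlier (-a) (i - k) (-x + 1) *
    (charlier a k (-1) * charlier a k (x - 2) - charlier a k (-2) * charlier a k (x - 1))

/-- The coefficient `A_0 = (-1)^{n-1} C_{n-1}^{(a)}(-2)` (with `C_{-1}^{(a)} ≡ 0`). -/
noncomputable def A0coef (a : ℝ) (n : ℕ) : ℝ :=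
  (-1 : ℝ) ^ ((n : ℤ) - 1) * charlierZ a ((n : ℤ) - 1) (-2)

lemma genChoose_zero (x : ℝ) : genChoose x 0 = 1 := by simp [genChoose]

lemma genChoose_fdiff (x : ℝ) (k : ℕ) :
    genChoose (x + 1) (k + 1) - genChoose x (k + 1) = genChoose x k := by
  have h1 : ∏ j ∈ Finset.range (k+1), (x + 1 - (j:ℝ))
      = (x+1) * ∏ j ∈ Finset.range k, (x - (j:ℝ)) := by
    rw [Finset.prod_range_succ' (fun j => (x + 1 - (j:ℝ)))]
    rw [mul_comm]
    congr 1
    · simp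
    · apply Finset.prod_congr rfl
      intro j _
      push_cast
      ring
  have h2 : ∏ j ∈ Finset.range (k+1), (x - (j:ℝ))
      = (∏ j ∈ Finset.range k, (x - (j:ℝ))) * (x - k) := Finset.prod_range_succ _ _
  have hfac : (Nat.factorial (k+1) : ℝ) = (k+1) * Nat.factorial k := by
    push_cast [Nat.factorial_succ]; ring
  rw [genChoose, genChoose, genChoose, h1, h2, hfac]
  have hk : (Nat.factorial k : ℝ) ≠ 0 := Nat.cast_ne_zero.2 (Nat.factorial_ne_zero k)
  field_simp
  ring

lemma charlier_fdiff (a : ℝ) (n : ℕ) (x : ℝ) :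
    charlier a (n + 1) (x + 1) - charlier a (n + 1) x = charlier a n x := by
  rw [charlier, charlier, ← Finset.sum_sub_distrib]
  have : ∀ k ∈ Finset.range (n + 2),
      genChoose (x+1) k * (-a) ^ (n + 1 - k) / (Nat.factorial (n + 1 - k) : ℝ)
        - genChoose x k * (-a) ^ (n + 1 - k) / (Nat.factorial (n + 1 - k) : ℝ)
      = (genChoose (x+1) k - genChoose x k) * (-a) ^ (n + 1 - k) / (Nat.factorial (n + 1 - k) : ℝ) := by
    intro k _; ring
  rw [Finset.sum_congr rfl this, Finset.sum_range_succ' _ (n+1)]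
  simp only [genChoose_fdiff, genChoose_zero, sub_self, zero_mul, zero_div, add_zero]
  rw [charlier]
  apply Finset.sum_congr rfl
  intro k _
  have h : n + 1 - (k + 1) = n - k := by omega
  rw [h]

lemma charlier_zero' (a x : ℝ) : charlier a 0 x = 1 := by
  simp [charlier, genChoose]

lemma charlier_add_nat (a : ℝ) (m : ℕ) : ∀ (n : ℕ) (x : ℝ),
    charlier a n (x + m) = ∑ j ∈ Finset.range (n + 1),
      (Nat.choose m j : ℝ) * charlier a (n - j) x := by
  induction m with
  | zero =>
    intro n x
    rw [Finset.sum_range_succ' _ n]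
    simp
  | succ m ih =>
    intro n x
    have hx : x + ((m : ℝ) + 1) = (x + m) + 1 := by ring
    match n with
    | 0 => simp [charlier_zero']
    | n + 1 =>
      push_cast
      rw [hx]
      have := charlier_fdiff a n (x + m)
      have hrw : charlier a (n+1) (x + m + 1)
          = charlier a (n+1) (x + m) + charlier a n (x + m) := by linarith
      rw [hrw, ih (n+1) x, ih n x]
      -- RHS goal: ∑ j in range (n+2), choose (m+1) j * C_{n+1-j}
      rw [Finset.sum_range_succ' (fun j => ((m+1).choose j : ℝ) * charlier a (n + 1 - j) x) (n+1)]
      rw [Finset.sum_range_succ' (fun j => (m.choose j : ℝ) * charlier a (n + 1 - j) x) (n+1)]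
      have hsplit : ∀ j ∈ Finset.range (n+1),
          ((m+1).choose (j+1) : ℝ) * charlier a (n + 1 - (j+1)) x
          = (m.choose (j+1) : ℝ) * charlier a (n + 1 - (j+1)) x
            + (m.choose j : ℝ) * charlier a (n - j) x := by
        intro j _
        have h1 : n + 1 - (j + 1) = n - j := by omega
        rw [Nat.choose_succ_succ, h1]
        push_cast; ring
      rw [Finset.sum_congr rfl hsplit, Finset.sum_add_distrib]
      simp only [Nat.choose_zero_right, Nat.cast_one, one_mul]
      have h2 : ∀ j ∈ Finset.range (n+1), (m.choose j : ℝ) * charlier a (n - j) x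
          = (m.choose j : ℝ) * charlier a (n - j) x := fun _ _ => rfl
      ring

-- C_k(-1) - C_k(-2) = C_{k-1}(-2) for k ≥ 1
lemma charlier_bracket (a : ℝ) (k : ℕ) :
    charlier a (k+1) (-1) - charlier a (k+1) (-2) = charlier a k (-2) := by
  have := charlier_fdiff a k (-2)
  norm_num at this
  linarith

open Polynomial in
/-- Polynomial whose evaluation at `x` is `charlier a n (σ*x + c)`. -/
noncomputable def chP (a : ℝ) (n : ℕ) (σ c : ℝ) : Polynomial ℝ :=
  ∑ k ∈ Finset.range (n+1),
    Polynomial.C ((-a)^(n-k) / (Nat.factorial (n-k) : ℝ) / (Nat.factorial k : ℝ)) *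
      ∏ j ∈ Finset.range k, (Polynomial.C σ * Polynomial.X + Polynomial.C (c - j))

lemma chP_eval (a : ℝ) (n : ℕ) (σ c x : ℝ) :
    (chP a n σ c).eval x = charlier a n (σ * x + c) := by
  rw [chP, charlier, Polynomial.eval_finset_sum]
  apply Finset.sum_congr rfl
  intro k _
  rw [Polynomial.eval_mul, Polynomial.eval_C, Polynomial.eval_prod, genChoose]
  simp only [Polynomial.eval_add, Polynomial.eval_mul, Polynomial.eval_C, Polynomial.eval_X]
  have : ∀ j ∈ Finset.range k, σ * x + (c - (j:ℝ)) = σ * x + c - (j:ℝ) := by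
    intro j _; ring
  rw [Finset.prod_congr rfl this]
  ring

lemma linProd_natDegree_le (σ c : ℝ) (k : ℕ) :
    (∏ j ∈ Finset.range k, (Polynomial.C σ * Polynomial.X + Polynomial.C (c - j))).natDegree ≤ k := by
  refine le_trans (Polynomial.natDegree_prod_le _ _) ?_
  calc ∑ j ∈ Finset.range k, (Polynomial.C σ * Polynomial.X + Polynomial.C (c - (j:ℝ))).natDegree
      ≤ ∑ _j ∈ Finset.range k, 1 := by
        exact Finset.sum_le_sum fun j _ => Polynomial.natDegree_linear_le
    _ = k := by simp

lemma chP_natDegree_le (a : ℝ) (n : ℕ) (σ c : ℝ) : (chP a n σ c).natDegree ≤ n := by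
  apply Polynomial.natDegree_sum_le_of_forall_le
  intro k hk
  refine le_trans (Polynomial.natDegree_mul_le) ?_
  simp only [Polynomial.natDegree_C, zero_add]
  exact le_trans (linProd_natDegree_le σ c k) (by simpa [Nat.lt_succ] using hk)

lemma chP_coeff (a : ℝ) (n : ℕ) {σ : ℝ} (hσ : σ ≠ 0) (c : ℝ) :
    (chP a n σ c).coeff n = σ ^ n / (Nat.factorial n : ℝ) := by
  rw [chP, Polynomial.finset_sum_coeff]
  rw [Finset.sum_range_succ]
  have hzero : ∀ k ∈ Finset.range n,
      (Polynomial.C ((-a)^(n-k) / (Nat.factorial (n-k) : ℝ) / (Nat.factorial k : ℝ)) *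
        ∏ j ∈ Finset.range k, (Polynomial.C σ * Polynomial.X + Polynomial.C (c - j))).coeff n = 0 := by
    intro k hk
    apply Polynomial.coeff_eq_zero_of_natDegree_lt
    refine lt_of_le_of_lt (le_trans Polynomial.natDegree_mul_le ?_) (Finset.mem_range.mp hk)
    simp only [Polynomial.natDegree_C, zero_add]
    exact linProd_natDegree_le σ c k
  rw [Finset.sum_eq_zero hzero, zero_add]
  have hne : ∀ j ∈ Finset.range n,
      (Polynomial.C σ * Polynomial.X + Polynomial.C (c - (j:ℝ))) ≠ 0 := by
    intro j _ h
    have := congrArg (fun p => Polynomial.coeff p 1) h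
    simp [Polynomial.coeff_add, Polynomial.coeff_C] at this
    exact hσ this
  have hdeg : (∏ j ∈ Finset.range n,
      (Polynomial.C σ * Polynomial.X + Polynomial.C (c - (j:ℝ)))).natDegree = n := by
    rw [Polynomial.natDegree_prod _ _ hne]
    rw [Finset.sum_congr rfl (fun j _ => Polynomial.natDegree_linear hσ)]
    simp
  have hlead : (∏ j ∈ Finset.range n,
      (Polynomial.C σ * Polynomial.X + Polynomial.C (c - (j:ℝ)))).coeff n = σ ^ n := by
    have := Polynomial.leadingCoeff_prod
      (f := fun j : ℕ => Polynomial.C σ * Polynomial.X + Polynomial.C (c - (j:ℝ)))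
      (s := Finset.range n)
    rw [Polynomial.leadingCoeff, hdeg] at this
    rw [this, Finset.prod_congr rfl (fun j _ => Polynomial.leadingCoeff_linear hσ)]
    simp
  rw [Polynomial.coeff_C_mul, hlead]
  simp only [Nat.sub_self, pow_zero, Nat.factorial_zero, Nat.cast_one, div_one, one_div]
  field_simp

noncomputable def AcoefP (a : ℝ) (i : ℕ) : Polynomial ℝ :=
  ∑ k ∈ Finset.Icc 1 i, Polynomial.C ((-1:ℝ)^k) * chP (-a) (i-k) (-1) 1 *
    (Polynomial.C (charlier a k (-1)) * chP a k 1 (-2)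
      - Polynomial.C (charlier a k (-2)) * chP a k 1 (-1))

lemma AcoefP_eval (a : ℝ) (i : ℕ) (x : ℝ) : (AcoefP a i).eval x = Acoef a i x := by
  rw [AcoefP, Acoef, Polynomial.eval_finset_sum]
  apply Finset.sum_congr rfl
  intro k _
  simp only [Polynomial.eval_mul, Polynomial.eval_sub, Polynomial.eval_C, chP_eval]
  have h1 : (-1:ℝ) * x + 1 = -x + 1 := by ring
  have h2 : (1:ℝ) * x + -2 = x - 2 := by ring
  have h3 : (1:ℝ) * x + -1 = x - 1 := by ring
  rw [h1, h2, h3]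

lemma AcoefP_natDegree_le (a : ℝ) (i : ℕ) : (AcoefP a i).natDegree ≤ i := by
  apply Polynomial.natDegree_sum_le_of_forall_le
  intro k hk
  have hki : k ≤ i := (Finset.mem_Icc.mp hk).2
  refine le_trans Polynomial.natDegree_mul_le ?_
  have hQ : (Polynomial.C (charlier a k (-1)) * chP a k 1 (-2)
      - Polynomial.C (charlier a k (-2)) * chP a k 1 (-1)).natDegree ≤ k := by
    refine le_trans (Polynomial.natDegree_sub_le _ _) ?_
    refine max_le ?_ ?_ <;>
      exact le_trans Polynomial.natDegree_mul_le
        (by simp only [Polynomial.natDegree_C, zero_add]; exact chP_natDegree_le _ _ _ _)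
  have hP : (Polynomial.C ((-1:ℝ)^k) * chP (-a) (i-k) (-1) 1).natDegree ≤ i - k := by
    refine le_trans Polynomial.natDegree_mul_le ?_
    simp only [Polynomial.natDegree_C, zero_add]
    exact chP_natDegree_le _ _ _ _
  omega

lemma AcoefP_coeff (a : ℝ) (i : ℕ) :
    (AcoefP a i).coeff i = ∑ k ∈ Finset.Icc 1 i, (-1:ℝ)^k * ((-1:ℝ)^(i-k) / (Nat.factorial (i-k):ℝ))
      * ((charlier a k (-1) - charlier a k (-2)) / (Nat.factorial k : ℝ)) := by
  rw [AcoefP, Polynomial.finset_sum_coeff]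
  apply Finset.sum_congr rfl
  intro k hk
  have hki : k ≤ i := (Finset.mem_Icc.mp hk).2
  have hik : i - k + k = i := by omega
  have hP : (Polynomial.C ((-1:ℝ)^k) * chP (-a) (i-k) (-1) 1).natDegree ≤ i - k := by
    refine le_trans Polynomial.natDegree_mul_le ?_
    simp only [Polynomial.natDegree_C, zero_add]
    exact chP_natDegree_le _ _ _ _
  have hQ : (Polynomial.C (charlier a k (-1)) * chP a k 1 (-2)
      - Polynomial.C (charlier a k (-2)) * chP a k 1 (-1)).natDegree ≤ k := by
    refine le_trans (Polynomial.natDegree_sub_le _ _) ?_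
    refine max_le ?_ ?_ <;>
      exact le_trans Polynomial.natDegree_mul_le
        (by simp only [Polynomial.natDegree_C, zero_add]; exact chP_natDegree_le _ _ _ _)
  have hc := Polynomial.coeff_mul_add_eq_of_natDegree_le hP hQ
  rw [hik] at hc
  rw [hc]
  have e1 : (Polynomial.C ((-1:ℝ)^k) * chP (-a) (i-k) (-1) 1).coeff (i-k)
      = (-1:ℝ)^k * ((-1:ℝ)^(i-k) / (Nat.factorial (i-k):ℝ)) := by
    rw [Polynomial.coeff_C_mul, chP_coeff _ _ (by norm_num : (-1:ℝ) ≠ 0)]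
  have e2 : (Polynomial.C (charlier a k (-1)) * chP a k 1 (-2)
      - Polynomial.C (charlier a k (-2)) * chP a k 1 (-1)).coeff k
      = (charlier a k (-1) - charlier a k (-2)) / (Nat.factorial k : ℝ) := by
    rw [Polynomial.coeff_sub, Polynomial.coeff_C_mul, Polynomial.coeff_C_mul,
      chP_coeff _ _ (by norm_num : (1:ℝ) ≠ 0), chP_coeff _ _ (by norm_num : (1:ℝ) ≠ 0)]
    rw [one_pow]
    ring
  rw [e1, e2]

/-- For `i ≥ 1`, `A_i` is a polynomial in `x` of degree at most `i`, whose
coefficient of `x^i` equals `h_i = ((-1)^i / i!) C_{i-1}^{(a)}(i-2)`. -/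
theorem Acoef_is_polynomial (a : ℝ) (i : ℕ) (hi : 1 ≤ i) :
    ∃ p : Polynomial ℝ, (∀ x : ℝ, Acoef a i x = p.eval x) ∧
      p.degree ≤ (i : ℕ) ∧
      p.coeff i = (-1 : ℝ) ^ i / (Nat.factorial i : ℝ) * charlier a (i - 1) ((i : ℝ) - 2) := by
  refine ⟨AcoefP a i, fun x => (AcoefP_eval a i x).symm, ?_, ?_⟩
  · exact le_trans Polynomial.degree_le_natDegree (by exact_mod_cast AcoefP_natDegree_le a i)
  · rw [AcoefP_coeff]
    -- rewrite brackets using charlier_bracket (k = (k-1)+1 for k ≥ 1)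
    have hbr : ∀ k ∈ Finset.Icc 1 i,
        (-1:ℝ)^k * ((-1:ℝ)^(i-k) / (Nat.factorial (i-k):ℝ))
          * ((charlier a k (-1) - charlier a k (-2)) / (Nat.factorial k : ℝ))
        = (-1:ℝ)^i * (charlier a (k-1) (-2) / ((Nat.factorial (i-k):ℝ) * (Nat.factorial k : ℝ))) := by
      intro k hk
      obtain ⟨hk1, hk2⟩ := Finset.mem_Icc.mp hk
      obtain ⟨m, rfl⟩ : ∃ m, k = m + 1 := ⟨k - 1, by omega⟩
      rw [charlier_bracket a m]
      have hsgn : (-1:ℝ)^(m+1) * (-1:ℝ)^(i-(m+1)) = (-1:ℝ)^i := by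
        rw [← pow_add]; congr 1; omega
      have : m + 1 - 1 = m := by omega
      rw [this]
      rw [← hsgn]
      ring
    rw [Finset.sum_congr rfl hbr]
    -- rewrite RHS charlier value via addition formula
    have hx : ((i:ℝ) - 2) = (-2 : ℝ) + (i:ℕ) := by push_cast; ring
    rw [hx, charlier_add_nat a i (i-1) (-2)]
    have hrange : i - 1 + 1 = i := by omega
    rw [hrange]
    -- reflect the RHS sum
    rw [← Finset.sum_range_reflect (fun j => (Nat.choose i j : ℝ) * charlier a (i - 1 - j) (-2)) i]
    -- convert LHS Icc sum to range sum
    rw [← Finset.Ico_add_one_right_eq_Icc, Finset.sum_Ico_eq_sum_range]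
    have hr : i + 1 - 1 = i := by omega
    rw [hr, Finset.mul_sum]
    apply Finset.sum_congr rfl
    intro j hj
    have hji : j < i := Finset.mem_range.mp hj
    have h1 : 1 + j - 1 = j := by omega
    have h2 : i - 1 - (i - 1 - j) = j := by omega
    have h3 : i - 1 - j = i - (1 + j) := by omega
    rw [h1, h2]
    have h4 : i - (1 + j) = i - (j+1) := by omega
    have h5 : (1:ℕ) + j = j + 1 := by omega
    have hcs : (Nat.choose i (i - 1 - j) : ℝ) = (Nat.choose i (j+1) : ℝ) := by
      have := Nat.choose_symm (show j + 1 ≤ i by omega) (n := i)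
      rw [h3, h4]
      exact_mod_cast this
    rw [hcs]
    have hfact : (Nat.choose i (j+1) : ℝ) * (Nat.factorial (j+1) : ℝ) * (Nat.factorial (i-(j+1)) : ℝ)
        = (Nat.factorial i : ℝ) := by
      exact_mod_cast congrArg (Nat.cast (R := ℝ))
        (Nat.choose_mul_factorial_mul_factorial (by omega : j + 1 ≤ i))
    have hi0 : (Nat.factorial i : ℝ) ≠ 0 := Nat.cast_ne_zero.2 (Nat.factorial_ne_zero i)
    have hj0 : (Nat.factorial (j+1) : ℝ) ≠ 0 := Nat.cast_ne_zero.2 (Nat.factorial_ne_zero _)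
    have hij0 : (Nat.factorial (i-(j+1)) : ℝ) ≠ 0 := Nat.cast_ne_zero.2 (Nat.factorial_ne_zero _)
    rw [h4, h5]
    field_simp
    linear_combination (-charlier a j (-2)) * hfact
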